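/- Soundness of the full temporal resolution rule: let A_0,…,A_n, B_0,…,B_n and C be conjunctions of literals and l a literal such that, for every i with 0 ≤ i ≤ n, the propositional formulae B_i ⇒ ¬l and B_i ⇒ (A_0 ∨ … ∨ A_n) are valid. Then the formula (□(⋀_{i=0}^{n} (A_i ⇒ ◯B_i)) ∧ □(C ⇒ ◇l)) ⇒ □(C ⇒ ((⋀_{i=0}^{n} ¬A_i) W l)) is valid. -/

import Mathlib

/-- Syntax of Propositional Linear Temporal Logic over proposition symbols `P`. -/
inductive PLTL (P : Type) : Type
  | tru : PLTL P
  | fls : PLTL P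
  | start : PLTL P
  | atom : P → PLTL P
  | neg : PLTL P → PLTL P
  | conj : PLTL P → PLTL P → PLTL P
  | disj : PLTL P → PLTL P → PLTL P
  | impl : PLTL P → PLTL P → PLTL P
  | next : PLTL P → PLTL P
  | evtl : PLTL P → PLTL P
  | alw : PLTL P → PLTL P
  | untl : PLTL P → PLTL P → PLTL P
  | unls : PLTL P → PLTL P → PLTL P

namespace PLTL

/-- Satisfaction `(σ, i) ⊨ A` of a PLTL formula in a model `σ : ℕ → Set P` at index `i`. -/
def Sat {P : Type} (σ : ℕ → Set P) : PLTL P → ℕ → Prop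
  | tru, _ => True
  | fls, _ => False
  | start, i => i = 0
  | atom p, i => p ∈ σ i
  | neg A, i => ¬ Sat σ A i
  | conj A B, i => Sat σ A i ∧ Sat σ B i
  | disj A B, i => Sat σ A i ∨ Sat σ B i
  | impl A B, i => Sat σ A i → Sat σ B i
  | next A, i => Sat σ A (i + 1)
  | evtl A, i => ∃ k, i ≤ k ∧ Sat σ A k
  | alw A, i => ∀ j, i ≤ j → Sat σ A j
  | untl A B, i => ∃ k, i ≤ k ∧ Sat σ B k ∧ ∀ j, i ≤ j → j < k → Sat σ A j
  | unls A B, i =>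
      (∃ k, i ≤ k ∧ Sat σ B k ∧ ∀ j, i ≤ j → j < k → Sat σ A j) ∨ (∀ j, i ≤ j → Sat σ A j)

/-- A formula is valid iff it is satisfied at index 0 of every model. -/
def Valid {P : Type} (A : PLTL P) : Prop := ∀ σ : ℕ → Set P, Sat σ A 0

/-- A formula with no temporal connectives is propositionally valid iff
it is satisfied at every index of every model. -/
def PropValid {P : Type} (A : PLTL P) : Prop := ∀ (σ : ℕ → Set P) (i : ℕ), Sat σ A i

/-- A literal is a proposition symbol or a negated proposition symbol. -/
def IsLiteral {P : Type} : PLTL P → Prop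
  | atom _ => True
  | neg (atom _) => True
  | _ => False

/-- A conjunction of literals. -/
def IsConjLits {P : Type} : PLTL P → Prop
  | atom _ => True
  | neg (atom _) => True
  | conj A B => IsConjLits A ∧ IsConjLits B
  | _ => False

/-- Biconditional `A ⇔ B` as an abbreviation. -/
def piff {P : Type} (A B : PLTL P) : PLTL P := conj (impl A B) (impl B A)

/-- Finite disjunction. -/
def bigOr {P : Type} (l : List (PLTL P)) : PLTL P := l.foldr disj fls

/-- Finite conjunction. -/
def bigAnd {P : Type} (l : List (PLTL P)) : PLTL P := l.foldr conj tru

/-- The proposition symbols occurring in a formula. -/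
def syms {P : Type} : PLTL P → Set P
  | tru => ∅
  | fls => ∅
  | start => ∅
  | atom p => {p}
  | neg A => syms A
  | conj A B => syms A ∪ syms B
  | disj A B => syms A ∪ syms B
  | impl A B => syms A ∪ syms B
  | next A => syms A
  | evtl A => syms A
  | alw A => syms A
  | untl A B => syms A ∪ syms B
  | unls A B => syms A ∪ syms B

end PLTL


open PLTL in
lemma sat_bigAnd_iff {P : Type} (σ : ℕ → Set P) (L : List (PLTL P)) (i : ℕ) :
    Sat σ (bigAnd L) i ↔ ∀ F ∈ L, Sat σ F i := by
  unfold bigAnd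
  induction L with
  | nil => simp [Sat]
  | cons a t ih => simp [Sat, ih]

open PLTL in
lemma sat_bigOr_iff {P : Type} (σ : ℕ → Set P) (L : List (PLTL P)) (i : ℕ) :
    Sat σ (bigOr L) i ↔ ∃ F ∈ L, Sat σ F i := by
  unfold bigOr
  induction L with
  | nil => simp [Sat]
  | cons a t ih => simp [Sat, ih]

open PLTL in
/-- soundness of the full temporal resolution rule. -/
theorem stmt_6 {P : Type} [Countable P] (n : ℕ) (A B : Fin (n + 1) → PLTL P)
    (C l : PLTL P)
    (hA : ∀ i, IsConjLits (A i)) (hB : ∀ i, IsConjLits (B i)) (hC : IsConjLits C)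
    (hl : IsLiteral l)
    (h1 : ∀ i, PropValid (impl (B i) (neg l)))
    (h2 : ∀ i, PropValid (impl (B i) (bigOr (List.ofFn A)))) :
    Valid (impl
      (conj (alw (bigAnd (List.ofFn fun i => impl (A i) (next (B i)))))
            (alw (impl C (evtl l))))
      (alw (impl C (unls (bigAnd (List.ofFn fun i => neg (A i))) l)))) := by
  classical
  intro σ
  simp only [Sat]
  rintro ⟨hstep, hev⟩ j _ hCj
  obtain ⟨k, hjk, hlk⟩ := hev j (Nat.zero_le j) hCj
  have hex : ∃ k, j ≤ k ∧ Sat σ l k := ⟨k, hjk, hlk⟩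
  -- stepping lemma
  have step : ∀ (t : ℕ) (i : Fin (n+1)), Sat σ (A i) t → Sat σ (B i) (t+1) := by
    intro t i hAi
    have := (sat_bigAnd_iff σ _ t).mp (hstep t (Nat.zero_le t))
        (impl (A i) (next (B i))) (List.mem_ofFn.mpr ⟨i, rfl⟩)
    exact this hAi
  have fromB : ∀ (t : ℕ) (i : Fin (n+1)), Sat σ (B i) t →
      (∃ i', Sat σ (A i') t) ∧ ¬ Sat σ l t := by
    intro t i hBi
    refine ⟨?_, h1 i σ t hBi⟩
    obtain ⟨F, hF, hFs⟩ := (sat_bigOr_iff σ _ t).mp (h2 i σ t hBi)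
    obtain ⟨i', rfl⟩ := List.mem_ofFn.mp hF
    exact ⟨i', hFs⟩
  left
  refine ⟨Nat.find hex, (Nat.find_spec hex).1, (Nat.find_spec hex).2, ?_⟩
  intro m hjm hmk
  rw [sat_bigAnd_iff]
  intro F hF
  obtain ⟨i, rfl⟩ := List.mem_ofFn.mp hF
  simp only [Sat]
  intro hAi
  have key : ∀ t, m + 1 ≤ t → (∃ i', Sat σ (A i') t) ∧ ¬ Sat σ l t := by
    intro t ht
    induction t, ht using Nat.le_induction with
    | base => exact fromB (m+1) i (step m i hAi)
    | succ t ht ih =>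
        obtain ⟨⟨i', hAi'⟩, _⟩ := ih
        exact fromB (t+1) i' (step t i' hAi')
  exact (key (Nat.find hex) hmk).2 (Nat.find_spec hex).2
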